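/- arXiv:1011.4685 — 3 statements merged into one kernel-verified Lean document; each statement's English description precedes it below -/
import Mathlib

section
/- Let 𝒞 be an abelian category with Ext-groups, and fix short exact sequences 0 → A →(j) M₁ →(π) N → 0 and 0 → N →(ι) M₂ →(ϖ) B → 0 in 𝒞, with extension classes e₁ ∈ Ext¹(N,A) and e₂ ∈ Ext¹(B,N) respectively. Then the Yoneda product of e₁ and e₂ vanishes in Ext²(B,A) if and only if there exists a blended extension of M₂ by M₁, i.e. an object M together with morphisms ι̃ : M₁ → M and π̃ : M → M₂ such that π̃ ∘ ι̃ = ι ∘ π and the sequences 0 → M₁ →(ι̃) M →(ϖ∘π̃) B → 0 and 0 → A →(ι̃∘j) M →(π̃) M₂ → 0 are short exact. -/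
open CategoryTheory CategoryTheory.Abelian

universe w v u

namespace BlendedExtAux

open CategoryTheory.Limits CategoryTheory.Pretriangulated DerivedCategory CategoryTheory.Category

variable {C : Type u} [Category.{v} C] [Abelian C]

section WithDerived

variable [HasDerivedCategory.{w} C]

/-- The single functor to the derived category is isomorphic to the composition of the
cochain-complex single functor with the localization functor. -/
noncomputable def evalQIso :
    DerivedCategory.singleFunctor C 0 ≅ CochainComplex.singleFunctor C 0 ⋙ DerivedCategory.Q :=
  (SingleFunctors.evaluation _ _ 0).mapIso (singleFunctorsPostcompQIso C)

/-- Homology in degree 0 of a single object. -/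
noncomputable def singleCompHomologyIso :
    DerivedCategory.singleFunctor C 0 ⋙ DerivedCategory.homologyFunctor C 0 ≅ 𝟭 C :=
  Functor.isoWhiskerRight evalQIso (DerivedCategory.homologyFunctor C 0) ≪≫ Functor.associator _ _ _ ≪≫
    Functor.isoWhiskerLeft _ (DerivedCategory.homologyFunctorFactors C 0) ≪≫
    HomologicalComplex.homologyFunctorSingleIso C (ComplexShape.up ℤ) 0

lemma isZero_homology_single (n : ℤ) (hn : n ≠ 0) (X : C) :
    IsZero ((DerivedCategory.homologyFunctor C n).obj
      ((DerivedCategory.singleFunctor C 0).obj X)) := by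
  refine IsZero.of_iso ?_ ((DerivedCategory.homologyFunctor C n).mapIso (evalQIso.app X) ≪≫
    (DerivedCategory.homologyFunctorFactors C n).app _)
  exact HomologicalComplex.isZero_single_obj_homology _ _ X n hn

lemma map_descShortComplex {S S' : ShortComplex (CochainComplex C ℤ)} (φ : S ⟶ S') :
    CochainComplex.mappingCone.map S.f S'.f φ.τ₁ φ.τ₂ φ.comm₁₂.symm ≫
      CochainComplex.mappingCone.descShortComplex S' =
    CochainComplex.mappingCone.descShortComplex S ≫ φ.τ₃ := by
  have h23 := φ.comm₂₃
  ext n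
  have h23n := congr_arg (fun ψ => HomologicalComplex.Hom.f ψ n) h23
  dsimp at h23n
  rw [CochainComplex.mappingCone.ext_from_iff _ (n + 1) n rfl]
  constructor
  · simp [CochainComplex.mappingCone.map, CochainComplex.mappingCone.descShortComplex]
  · simp [CochainComplex.mappingCone.map, CochainComplex.mappingCone.descShortComplex, h23n]

lemma triangleOfSESδ_naturality {S S' : ShortComplex (CochainComplex C ℤ)}
    (hS : S.ShortExact) (hS' : S'.ShortExact) (φ : S ⟶ S') :
    DerivedCategory.triangleOfSESδ hS ≫ (DerivedCategory.Q.map φ.τ₁)⟦(1:ℤ)⟧' =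
      DerivedCategory.Q.map φ.τ₃ ≫ DerivedCategory.triangleOfSESδ hS' := by
  have hq := CochainComplex.mappingCone.quasiIso_descShortComplex hS
  have hq' := CochainComplex.mappingCone.quasiIso_descShortComplex hS'
  have hnat := (DerivedCategory.Q.commShiftIso (1 : ℤ)).hom.naturality φ.τ₁
  dsimp at hnat
  have hcone := (CochainComplex.mappingCone.triangleMap S.f S'.f φ.τ₁ φ.τ₂ φ.comm₁₂.symm).comm₃
  have key : DerivedCategory.Q.map
        (CochainComplex.mappingCone.map S.f S'.f φ.τ₁ φ.τ₂ φ.comm₁₂.symm) ≫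
        DerivedCategory.Q.map (CochainComplex.mappingCone.descShortComplex S') =
      DerivedCategory.Q.map (CochainComplex.mappingCone.descShortComplex S) ≫
        DerivedCategory.Q.map φ.τ₃ := by
    rw [← Functor.map_comp, ← Functor.map_comp, map_descShortComplex]
  have key' : inv (DerivedCategory.Q.map (CochainComplex.mappingCone.descShortComplex S)) ≫
      DerivedCategory.Q.map
        (CochainComplex.mappingCone.map S.f S'.f φ.τ₁ φ.τ₂ φ.comm₁₂.symm) =
      DerivedCategory.Q.map φ.τ₃ ≫
        inv (DerivedCategory.Q.map (CochainComplex.mappingCone.descShortComplex S')) := by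
    rw [IsIso.inv_comp_eq, ← Category.assoc, IsIso.eq_comp_inv]
    exact key
  dsimp only [DerivedCategory.triangleOfSESδ]
  exact DerivedCategory.triangleOfSESδ_naturality hS hS' φ

lemma singleδ_naturality {S S' : ShortComplex C} (hS : S.ShortExact) (hS' : S'.ShortExact)
    (φ : S ⟶ S') :
    hS.singleδ ≫ (((DerivedCategory.singleFunctor C 0).map φ.τ₁))⟦(1:ℤ)⟧' =
      (DerivedCategory.singleFunctor C 0).map φ.τ₃ ≫ hS'.singleδ := by
  have key := triangleOfSESδ_naturality
    (hS.map_of_exact (HomologicalComplex.single C (ComplexShape.up ℤ) 0))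
    (hS'.map_of_exact (HomologicalComplex.single C (ComplexShape.up ℤ) 0))
    ((HomologicalComplex.single C (ComplexShape.up ℤ) 0).mapShortComplex.map φ)
  dsimp only [Functor.mapShortComplex, ShortComplex.map] at key
  have hinv := (evalQIso (C := C)).inv.naturality φ.τ₁
  have hhom := (evalQIso (C := C)).hom.naturality φ.τ₃
  dsimp only [evalQIso, Functor.comp_map] at hinv hhom
  have hinv' : DerivedCategory.Q.map
      ((HomologicalComplex.single C (ComplexShape.up ℤ) 0).map φ.τ₁) ≫
      ((SingleFunctors.evaluation C (DerivedCategory C) 0).mapIso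
        (singleFunctorsPostcompQIso C)).inv.app S'.X₁ =
      ((SingleFunctors.evaluation C (DerivedCategory C) 0).mapIso
        (singleFunctorsPostcompQIso C)).inv.app S.X₁ ≫
        (DerivedCategory.singleFunctor C 0).map φ.τ₁ := hinv
  have hhom' : (DerivedCategory.singleFunctor C 0).map φ.τ₃ ≫
      ((SingleFunctors.evaluation C (DerivedCategory C) 0).mapIso
        (singleFunctorsPostcompQIso C)).hom.app S'.X₃ =
      ((SingleFunctors.evaluation C (DerivedCategory C) 0).mapIso
        (singleFunctorsPostcompQIso C)).hom.app S.X₃ ≫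
        DerivedCategory.Q.map
          ((HomologicalComplex.single C (ComplexShape.up ℤ) 0).map φ.τ₃) := hhom
  dsimp only [ShortComplex.ShortExact.singleδ]
  exact (ShortComplex.ShortExact.singleTriangle.map hS hS' φ).comm₃

lemma shortExact_of_distTriang (X Z : C) (Y : DerivedCategory C)
    (f : (DerivedCategory.singleFunctor C 0).obj X ⟶ Y)
    (g : Y ⟶ (DerivedCategory.singleFunctor C 0).obj Z)
    (δ : (DerivedCategory.singleFunctor C 0).obj Z ⟶
      ((DerivedCategory.singleFunctor C 0).obj X)⟦(1:ℤ)⟧)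
    (hT : Triangle.mk f g δ ∈ distTriang (DerivedCategory C)) :
    ∃ (w : ((singleCompHomologyIso (C := C)).inv.app X ≫
        (DerivedCategory.homologyFunctor C 0).map f) ≫
        ((DerivedCategory.homologyFunctor C 0).map g ≫
          (singleCompHomologyIso (C := C)).hom.app Z) = 0),
      (ShortComplex.mk _ _ w).ShortExact := by
  have z : f ≫ g = 0 := comp_distTriang_mor_zero₁₂ _ hT
  have w0 : (DerivedCategory.homologyFunctor C 0).map f ≫
      (DerivedCategory.homologyFunctor C 0).map g = 0 := by
    rw [← Functor.map_comp, z, Functor.map_zero]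
  haveI hm : Mono ((DerivedCategory.homologyFunctor C 0).map f) := by
    have := (DerivedCategory.HomologySequence.mono_homologyMap_mor₁_iff
      (Triangle.mk f g δ) hT (-1) 0 (by omega)).2
    exact this ((isZero_homology_single (-1) (by omega) Z).eq_of_src _ _)
  haveI he : Epi ((DerivedCategory.homologyFunctor C 0).map g) := by
    have := (DerivedCategory.HomologySequence.epi_homologyMap_mor₂_iff
      (Triangle.mk f g δ) hT 0 1 (by omega)).2
    exact this ((isZero_homology_single 1 (by omega) X).eq_of_tgt _ _)
  have hex : (ShortComplex.mk _ _ w0).Exact :=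
    DerivedCategory.HomologySequence.exact₂ (Triangle.mk f g δ) hT 0
  have base : (ShortComplex.mk _ _ w0).ShortExact := { exact := hex }
  have w : ((singleCompHomologyIso (C := C)).inv.app X ≫
      (DerivedCategory.homologyFunctor C 0).map f) ≫
      ((DerivedCategory.homologyFunctor C 0).map g ≫
        (singleCompHomologyIso (C := C)).hom.app Z) = 0 := by
    rw [assoc, reassoc_of% w0, zero_comp, comp_zero]
  refine ⟨w, ?_⟩
  refine ShortComplex.shortExact_of_iso
    (S₁ := ShortComplex.mk _ _ w0) ?_ base
  exact ShortComplex.isoMk ((singleCompHomologyIso (C := C)).app X) (Iso.refl _)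
    ((singleCompHomologyIso (C := C)).app Z) (by simp) (by simp)

end WithDerived

section WithExt

variable [HasExt.{w} C]

lemma extClass_naturality {S S' : ShortComplex C} (hS : S.ShortExact) (hS' : S'.ShortExact)
    (φ : S ⟶ S') :
    (Ext.mk₀ φ.τ₃).comp hS'.extClass (zero_add 1) =
      (hS.extClass.comp (Ext.mk₀ φ.τ₁) (add_zero 1) : Ext.{w} S.X₃ S'.X₁ 1) := by
  letI := HasDerivedCategory.standard C
  apply Ext.ext
  rw [← Ext.singleFunctor_map_comp_hom, ← Ext.hom_comp_singleFunctor_map_shift,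
    hS.extClass_hom, hS'.extClass_hom]
  exact (singleδ_naturality hS hS' φ).symm

end WithExt

/-- transfer a short exactness along an equality of the second map -/
lemma ses_congr_g {X Y Z : C} {f : X ⟶ Y} {g g' : Y ⟶ Z} (h : g = g') {w : f ≫ g = 0}
    {w' : f ≫ g' = 0} (hS : (ShortComplex.mk f g w).ShortExact) :
    (ShortComplex.mk f g' w').ShortExact := by subst h; exact hS

lemma ses_congr_f {X Y Z : C} {f f' : X ⟶ Y} {g : Y ⟶ Z} (h : f = f') {w : f ≫ g = 0}
    {w' : f' ≫ g = 0} (hS : (ShortComplex.mk f g w).ShortExact) :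
    (ShortComplex.mk f' g w').ShortExact := by subst h; exact hS

end BlendedExtAux

open CategoryTheory.Pretriangulated CategoryTheory.Limits

/-- **Criterion for the existence of blended extensions** (Grothendieck, SGA 7, 9.3.8.c).
Given short exact sequences `0 → A →(j) M₁ →(π) N → 0` and `0 → N →(ι) M₂ →(ϖ) B → 0`
in an abelian category `𝒞` (with Ext-groups), the Yoneda product of the class
`e₁ ∈ Ext¹(N, A)` of the first sequence with the class `e₂ ∈ Ext¹(B, N)` of the second
vanishes in `Ext²(B, A)` if and only if there exists a blended extension of `M₂` by `M₁`. -/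
theorem yoneda_product_eq_zero_iff_exists_blended_extension
    {𝒞 : Type u} [Category.{v} 𝒞] [Abelian 𝒞] [HasExt.{w} 𝒞]
    {A B N M₁ M₂ : 𝒞}
    (j : A ⟶ M₁) (π : M₁ ⟶ N) (ι : N ⟶ M₂) (ϖ : M₂ ⟶ B)
    (w₁ : j ≫ π = 0) (h₁ : (ShortComplex.mk j π w₁).ShortExact)
    (w₂ : ι ≫ ϖ = 0) (h₂ : (ShortComplex.mk ι ϖ w₂).ShortExact) :
    (h₂.extClass.comp h₁.extClass (by norm_num) : Ext B A 2) = 0 ↔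
      ∃ (M : 𝒞) (ι' : M₁ ⟶ M) (π' : M ⟶ M₂)
        (_ : ι' ≫ π' = π ≫ ι)
        (w₃ : ι' ≫ (π' ≫ ϖ) = 0) (w₄ : (j ≫ ι') ≫ π' = 0),
        (ShortComplex.mk ι' (π' ≫ ϖ) w₃).ShortExact ∧
        (ShortComplex.mk (j ≫ ι') π' w₄).ShortExact := by
  letI := HasDerivedCategory.standard 𝒞
  constructor
  · intro hvanish
    obtain ⟨g, hg⟩ := Ext.covariant_sequence_exact₃ B h₁ h₂.extClass
      (show 1 + 1 = 2 by omega) hvanish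
    have hg' : g.comp (Ext.mk₀ π) (add_zero 1) = h₂.extClass := hg
    have hGδ : g.hom ≫ ((DerivedCategory.singleFunctor 𝒞 0).map π)⟦((1 : ℕ) : ℤ)⟧' =
        h₂.singleδ := by
      rw [Ext.hom_comp_singleFunctor_map_shift, hg', h₂.extClass_hom]
    obtain ⟨E, i, q, hT⟩ := Pretriangulated.distinguished_cocone_triangle₂ g.hom
    have hTri1 : Triangle.mk ((DerivedCategory.singleFunctor 𝒞 0).map j)
        ((DerivedCategory.singleFunctor 𝒞 0).map π) h₁.singleδ ∈
          distTriang (DerivedCategory 𝒞) :=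
      h₁.singleTriangle_distinguished
    obtain ⟨F, v, w', hTF⟩ := Pretriangulated.distinguished_cocone_triangle
      ((DerivedCategory.singleFunctor 𝒞 0).map j ≫ i)
    have O := Triangulated.someOctahedron rfl hTri1 hT hTF
    have hOmem : Triangle.mk O.m₁ O.m₃ (g.hom ≫ ((DerivedCategory.singleFunctor 𝒞 0).map π)⟦(1:ℤ)⟧') ∈
        distTriang (DerivedCategory 𝒞) := O.mem
    obtain ⟨φF, hφ₁, hφ₂⟩ : ∃ (φF : F ⟶ (DerivedCategory.singleFunctor 𝒞 0).obj M₂),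
        O.m₁ ≫ φF = 𝟙 _ ≫ (DerivedCategory.singleFunctor 𝒞 0).map ι ∧ O.m₃ ≫ 𝟙 _ = φF ≫ (DerivedCategory.singleFunctor 𝒞 0).map ϖ :=
      Pretriangulated.complete_distinguished_triangle_morphism₂
      _ h₂.singleTriangle hOmem h₂.singleTriangle_distinguished (𝟙 _) (𝟙 _) (by
        change (g.hom ≫ ((DerivedCategory.singleFunctor 𝒞 0).map π)⟦(1:ℤ)⟧') ≫ (𝟙 ((DerivedCategory.singleFunctor 𝒞 0).obj N))⟦(1:ℤ)⟧' =
          𝟙 ((DerivedCategory.singleFunctor 𝒞 0).obj B) ≫ h₂.singleδ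
        rw [CategoryTheory.Functor.map_id, Category.comp_id, Category.id_comp]
        exact hGδ)
    rw [Category.id_comp] at hφ₁
    rw [Category.comp_id] at hφ₂
    have hφF : IsIso φF := by
      refine Pretriangulated.isIso₂_of_isIso₁₃
        (T := Triangle.mk O.m₁ O.m₃ _) (T' := h₂.singleTriangle)
        { hom₁ := 𝟙 _, hom₂ := φF, hom₃ := 𝟙 _,
          comm₁ := by
            change O.m₁ ≫ φF = 𝟙 _ ≫ (DerivedCategory.singleFunctor 𝒞 0).map ι; rw [Category.id_comp]; exact hφ₁,
          comm₂ := by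
            change O.m₃ ≫ 𝟙 _ = φF ≫ (DerivedCategory.singleFunctor 𝒞 0).map ϖ; rw [Category.comp_id]; exact hφ₂,
          comm₃ := by
            change (g.hom ≫ ((DerivedCategory.singleFunctor 𝒞 0).map π)⟦(1:ℤ)⟧') ≫ (𝟙 ((DerivedCategory.singleFunctor 𝒞 0).obj N))⟦(1:ℤ)⟧' =
              𝟙 ((DerivedCategory.singleFunctor 𝒞 0).obj B) ≫ h₂.singleδ
            rw [CategoryTheory.Functor.map_id, Category.comp_id, Category.id_comp]
            exact hGδ }
        hOmem h₂.singleTriangle_distinguished ?_ ?_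
      · change IsIso (𝟙 ((DerivedCategory.singleFunctor 𝒞 0).obj N)); infer_instance
      · change IsIso (𝟙 ((DerivedCategory.singleFunctor 𝒞 0).obj B)); infer_instance
    have hT4 : Triangle.mk
        ((DerivedCategory.singleFunctor 𝒞 0).map j ≫ i) (v ≫ φF) (inv φF ≫ w') ∈
          distTriang (DerivedCategory 𝒞) := by
      refine isomorphic_distinguished _ hTF _ ?_
      refine Triangle.isoMk _ _ (Iso.refl ((DerivedCategory.singleFunctor 𝒞 0).obj A)) (Iso.refl E) (asIso φF).symm
        ?_ ?_ ?_
      · change ((DerivedCategory.singleFunctor 𝒞 0).map j ≫ i) ≫ 𝟙 E = 𝟙 _ ≫ ((DerivedCategory.singleFunctor 𝒞 0).map j ≫ i)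
        rw [Category.id_comp, Category.comp_id]
      · change (v ≫ φF) ≫ inv φF = 𝟙 E ≫ v
        rw [Category.id_comp, Category.assoc, IsIso.hom_inv_id, Category.comp_id]
      · change (inv φF ≫ w') ≫ (𝟙 ((DerivedCategory.singleFunctor 𝒞 0).obj A))⟦(1:ℤ)⟧' = inv φF ≫ w'
        rw [CategoryTheory.Functor.map_id, Category.comp_id]
    obtain ⟨wa, ha⟩ := BlendedExtAux.shortExact_of_distTriang M₁ B E i q g.hom hT
    obtain ⟨wb, hb⟩ := BlendedExtAux.shortExact_of_distTriang A M₂ E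
      ((DerivedCategory.singleFunctor 𝒞 0).map j ≫ i) (v ≫ φF) (inv φF ≫ w') hT4
    have hφ₁' : O.m₁ ≫ φF = (DerivedCategory.singleFunctor 𝒞 0).map ι := hφ₁
    have hφ₂' : φF ≫ (DerivedCategory.singleFunctor 𝒞 0).map ϖ = O.m₃ := hφ₂.symm
    have γnat : ∀ {P Q : 𝒞} (u : P ⟶ Q),
        (DerivedCategory.homologyFunctor 𝒞 0).map ((DerivedCategory.singleFunctor 𝒞 0).map u) ≫
          (BlendedExtAux.singleCompHomologyIso (C := 𝒞)).hom.app Q =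
        (BlendedExtAux.singleCompHomologyIso (C := 𝒞)).hom.app P ≫ u := by
      intro P Q u
      have h := (BlendedExtAux.singleCompHomologyIso (C := 𝒞)).hom.naturality u
      dsimp at h
      exact h
    have γnat' : ∀ {P Q : 𝒞} (u : P ⟶ Q),
        u ≫ (BlendedExtAux.singleCompHomologyIso (C := 𝒞)).inv.app Q =
        (BlendedExtAux.singleCompHomologyIso (C := 𝒞)).inv.app P ≫
          (DerivedCategory.homologyFunctor 𝒞 0).map
            ((DerivedCategory.singleFunctor 𝒞 0).map u) := by
      intro P Q u
      have h := (BlendedExtAux.singleCompHomologyIso (C := 𝒞)).inv.naturality u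
      dsimp at h
      exact h
    have hi1 : i ≫ v ≫ φF = (DerivedCategory.singleFunctor 𝒞 0).map (π ≫ ι) := by
      rw [CategoryTheory.Functor.map_comp, ← Category.assoc, ← O.comm₁, Category.assoc, hφ₁']
    have hvφ : (v ≫ φF) ≫ (DerivedCategory.singleFunctor 𝒞 0).map ϖ = q := by
      rw [Category.assoc, hφ₂', O.comm₃]
    have hc : ((BlendedExtAux.singleCompHomologyIso (C := 𝒞)).inv.app M₁ ≫
        (DerivedCategory.homologyFunctor 𝒞 0).map i) ≫
        ((DerivedCategory.homologyFunctor 𝒞 0).map (v ≫ φF) ≫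
          (BlendedExtAux.singleCompHomologyIso (C := 𝒞)).hom.app M₂) = π ≫ ι := by
      rw [Category.assoc, ← Functor.map_comp_assoc, hi1, γnat (π ≫ ι),
        Iso.inv_hom_id_app_assoc]
    have hq : ((DerivedCategory.homologyFunctor 𝒞 0).map (v ≫ φF) ≫
        (BlendedExtAux.singleCompHomologyIso (C := 𝒞)).hom.app M₂) ≫ ϖ =
        (DerivedCategory.homologyFunctor 𝒞 0).map q ≫
          (BlendedExtAux.singleCompHomologyIso (C := 𝒞)).hom.app B := by
      rw [Category.assoc, ← γnat ϖ, ← Functor.map_comp_assoc, hvφ]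
    have hjι : j ≫ ((BlendedExtAux.singleCompHomologyIso (C := 𝒞)).inv.app M₁ ≫
        (DerivedCategory.homologyFunctor 𝒞 0).map i) =
        (BlendedExtAux.singleCompHomologyIso (C := 𝒞)).inv.app A ≫
          (DerivedCategory.homologyFunctor 𝒞 0).map
            ((DerivedCategory.singleFunctor 𝒞 0).map j ≫ i) := by
      rw [CategoryTheory.Functor.map_comp, ← Category.assoc, γnat' j, Category.assoc]
    refine ⟨(DerivedCategory.homologyFunctor 𝒞 0).obj E,
      (BlendedExtAux.singleCompHomologyIso (C := 𝒞)).inv.app M₁ ≫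
        (DerivedCategory.homologyFunctor 𝒞 0).map i,
      (DerivedCategory.homologyFunctor 𝒞 0).map (v ≫ φF) ≫
        (BlendedExtAux.singleCompHomologyIso (C := 𝒞)).hom.app M₂, hc, ?_, ?_, ?_, ?_⟩
    · rw [hq]; exact wa
    · rw [hjι]; exact wb
    · exact BlendedExtAux.ses_congr_g hq.symm ha
    · exact BlendedExtAux.ses_congr_f hjι.symm hb
  · rintro ⟨M, ι', π', hcomm, w₃, w₄, h₃, h₄⟩
    have n1 := BlendedExtAux.extClass_naturality h₃ h₂
      (ShortComplex.homMk π π' (𝟙 B) hcomm.symm (by simp))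
    have n2 := BlendedExtAux.extClass_naturality h₁ h₄
      (ShortComplex.homMk (𝟙 A) ι' ι (by simp) hcomm)
    have n1' : (Ext.mk₀ (𝟙 B)).comp h₂.extClass (zero_add 1) =
        h₃.extClass.comp (Ext.mk₀ π) (add_zero 1) := n1
    have n2' : (Ext.mk₀ ι).comp h₄.extClass (zero_add 1) =
        h₁.extClass.comp (Ext.mk₀ (𝟙 A)) (add_zero 1) := n2
    have n1'' : h₂.extClass = h₃.extClass.comp (Ext.mk₀ π) (add_zero 1) := by
      rw [← n1', Ext.mk₀_id_comp]
    have n2'' : h₁.extClass = (Ext.mk₀ ι).comp h₄.extClass (zero_add 1) := by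
      rw [n2', Ext.comp_mk₀_id]
    have z : (Ext.mk₀ π').comp h₄.extClass (zero_add 1) = 0 := h₄.comp_extClass
    rw [n1'', n2'', Ext.comp_assoc_of_second_deg_zero, Ext.mk₀_comp_mk₀_assoc, ← hcomm,
      ← Ext.mk₀_comp_mk₀_assoc, z]
    simp
end

section
/- For all a×a matrices z, z' and all h×a matrices ν, ν' over k, the commutator satisfies u(z,ν) · u(z',ν') · u(z,ν)⁻¹ · u(z',ν')⁻¹ = u(ν'^T·J·ν − ν^T·J·ν', 0). -/
open Matrix

variable {k : Type*} [Field k]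

/-- The Gram matrix `Ψ = [[0, 0, ε·I_a], [0, J, 0], [I_a, 0, 0]]` of the
`ε`-symmetric form in the standard basis adapted to the totally isotropic subspace. -/
def Psi (ε : k) (a h : ℕ) (J : Matrix (Fin h) (Fin h) k) :
    Matrix ((Fin a ⊕ Fin h) ⊕ Fin a) ((Fin a ⊕ Fin h) ⊕ Fin a) k :=
  Matrix.fromBlocks (Matrix.fromBlocks 0 0 0 J)
    (Matrix.fromRows (ε • (1 : Matrix (Fin a) (Fin a) k)) 0)
    (Matrix.fromCols (1 : Matrix (Fin a) (Fin a) k) 0) 0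

/-- The unipotent block matrix
`u(z,ν) = [[I_a, -ν^T·J, z - (1/2)·ν^T·J·ν], [0, I_h, ν], [0, 0, I_a]]`. -/
def uMat (a h : ℕ) (J : Matrix (Fin h) (Fin h) k)
    (z : Matrix (Fin a) (Fin a) k) (ν : Matrix (Fin h) (Fin a) k) :
    Matrix ((Fin a ⊕ Fin h) ⊕ Fin a) ((Fin a ⊕ Fin h) ⊕ Fin a) k :=
  Matrix.fromBlocks (Matrix.fromBlocks 1 (-(νᵀ * J)) 0 1)
    (Matrix.fromRows (z - (1 / 2 : k) • (νᵀ * J * ν)) ν)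
    (Matrix.fromCols 0 0) 1

lemma myFromRows_add {m₁ m₂ n : Type*} (A C : Matrix m₁ n k) (B D : Matrix m₂ n k) :
    fromRows A B + fromRows C D = fromRows (A + C) (B + D) := by
  ext i j; cases i <;> simp [fromRows_apply_inl, fromRows_apply_inr]

set_option maxHeartbeats 1000000 in
lemma uMat_mul (a h : ℕ) (J : Matrix (Fin h) (Fin h) k)
    (z z' : Matrix (Fin a) (Fin a) k) (ν ν' : Matrix (Fin h) (Fin a) k) :
    uMat a h J z ν * uMat a h J z' ν' =
      uMat a h J
        (z + z' + ((1/2 : k) • (ν'ᵀ * J * ν + νᵀ * J * ν') - νᵀ * J * ν')) (ν + ν') := by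
  simp only [uMat, fromBlocks_multiply, fromBlocks_mul_fromRows, fromCols_mul_fromBlocks,
    fromRows_mul, mul_fromCols, fromCols_mul_fromRows, Matrix.mul_zero, Matrix.zero_mul,
    Matrix.mul_one, Matrix.one_mul, add_zero, zero_add, Matrix.neg_mul, neg_zero, fromRows_zero,
    fromCols_zero, transpose_add, myFromRows_add]
  rw [fromBlocks_inj, fromBlocks_inj, fromRows_inj.eq_iff]
  refine ⟨⟨rfl, by rw [Matrix.add_mul]; abel, rfl, rfl⟩, ⟨?_, add_comm ν' ν⟩, rfl, rfl⟩
  rw [Matrix.add_mul, Matrix.add_mul, Matrix.mul_add, Matrix.mul_add]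
  module

lemma uMat_zero (a h : ℕ) (J : Matrix (Fin h) (Fin h) k) :
    uMat a h J 0 0 = (1 : Matrix ((Fin a ⊕ Fin h) ⊕ Fin a) ((Fin a ⊕ Fin h) ⊕ Fin a) k) := by
  have : (fromCols 0 0 : Matrix (Fin a) (Fin a ⊕ Fin h) k) = 0 := fromCols_zero
  have h2 : (fromRows 0 0 : Matrix (Fin a ⊕ Fin h) (Fin a) k) = 0 := fromRows_zero
  simp only [uMat, transpose_zero, Matrix.zero_mul, neg_zero, Matrix.mul_zero, smul_zero,
    sub_zero, fromBlocks_one, h2, this]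

lemma uMat_inv (a h : ℕ) (J : Matrix (Fin h) (Fin h) k)
    (z : Matrix (Fin a) (Fin a) k) (ν : Matrix (Fin h) (Fin a) k) :
    (uMat a h J z ν)⁻¹ =
      uMat a h J (-z - ((1/2 : k) • ((-ν)ᵀ * J * ν + νᵀ * J * (-ν)) - νᵀ * J * (-ν))) (-ν) := by
  apply Matrix.inv_eq_right_inv
  rw [uMat_mul, add_neg_cancel ν]
  have e : z + (-z - ((1/2 : k) • ((-ν)ᵀ * J * ν + νᵀ * J * (-ν)) - νᵀ * J * (-ν))) +
      ((1/2 : k) • ((-ν)ᵀ * J * ν + νᵀ * J * (-ν)) - νᵀ * J * (-ν)) = 0 := by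
    simp only [transpose_neg, Matrix.neg_mul, Matrix.mul_neg, neg_neg]
    module
  rw [e, uMat_zero]


/-- Commutator formula:
`u(z,ν)·u(z',ν')·u(z,ν)⁻¹·u(z',ν')⁻¹ = u(ν'^T·J·ν − ν^T·J·ν', 0)`. -/
theorem uMat_commutator
    (ε : k) (hε : ε = 1 ∨ ε = -1) (a h : ℕ)
    (J : Matrix (Fin h) (Fin h) k) (hJ : IsUnit J) (hJt : Jᵀ = ε • J)
    (z z' : Matrix (Fin a) (Fin a) k) (ν ν' : Matrix (Fin h) (Fin a) k) :
    uMat a h J z ν * uMat a h J z' ν' * (uMat a h J z ν)⁻¹ * (uMat a h J z' ν')⁻¹ =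
      uMat a h J (ν'ᵀ * J * ν - νᵀ * J * ν') 0 := by
  rw [uMat_inv, uMat_inv, uMat_mul, uMat_mul, uMat_mul]
  have e2 : ν + ν' + -ν + -ν' = 0 := by abel
  rw [e2]
  apply congrArg (fun m => uMat a h J m 0)
  simp only [transpose_neg, transpose_add, Matrix.neg_mul, Matrix.mul_neg, neg_neg,
    Matrix.add_mul, Matrix.mul_add]
  module
end

section
/- Let (M, ι̃, π̃) be a blended extension of M₂ by M₁ in 𝒞, and let F : M → M be a morphism with F ∘ ι̃ = ι̃ and π̃ ∘ F = π̃. Then there exists a unique morphism f : B → A such that F = id_M + (ι̃ ∘ j) ∘ f ∘ (ϖ ∘ π̃); moreover every such F is an isomorphism. -/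
open CategoryTheory

universe v u

/-- An endomorphism `F` of a blended extension `M` of `M₂` by `M₁` which induces the identity
on `M₁` and on `M₂` is of the form `id_M + ι̃ ∘ j ∘ f ∘ ϖ ∘ π̃` for a unique `f : B ⟶ A`;
moreover every such `F` is an isomorphism. -/
theorem blendedExtension_endo_eq_id_add_and_isIso
    {𝒞 : Type u} [Category.{v} 𝒞] [Abelian 𝒞]
    {A B N M₁ M₂ M : 𝒞}
    (j : A ⟶ M₁) (π : M₁ ⟶ N) (ι : N ⟶ M₂) (ϖ : M₂ ⟶ B)
    (w₁ : j ≫ π = 0) (h₁ : (ShortComplex.mk j π w₁).ShortExact)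
    (w₂ : ι ≫ ϖ = 0) (h₂ : (ShortComplex.mk ι ϖ w₂).ShortExact)
    (ι' : M₁ ⟶ M) (π' : M ⟶ M₂)
    (hcomm : ι' ≫ π' = π ≫ ι)
    (w₃ : ι' ≫ (π' ≫ ϖ) = 0) (h₃ : (ShortComplex.mk ι' (π' ≫ ϖ) w₃).ShortExact)
    (w₄ : (j ≫ ι') ≫ π' = 0) (h₄ : (ShortComplex.mk (j ≫ ι') π' w₄).ShortExact)
    (F : M ⟶ M) (hF₁ : ι' ≫ F = ι') (hF₂ : F ≫ π' = π') :
    (∃! f : B ⟶ A, F = 𝟙 M + π' ≫ ϖ ≫ f ≫ j ≫ ι') ∧ IsIso F := by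
  have epi3 : Epi (π' ≫ ϖ) := h₃.epi_g
  have mono4 : Mono (j ≫ ι') := h₄.mono_f
  set G : M ⟶ M := F - 𝟙 M with hG
  have hιG : ι' ≫ G = 0 := by simp [hG, Preadditive.comp_sub, hF₁]
  obtain ⟨g, hg⟩ : ∃ g : B ⟶ M, (π' ≫ ϖ) ≫ g = G :=
    ⟨h₃.exact.desc G hιG, h₃.exact.g_desc G hιG⟩
  have hgπ : g ≫ π' = 0 := by
    rw [← cancel_epi (π' ≫ ϖ), ← Category.assoc, hg, Limits.comp_zero]
    simp [hG, Preadditive.sub_comp, hF₂]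
  obtain ⟨f, hf⟩ : ∃ f : B ⟶ A, f ≫ (j ≫ ι') = g :=
    ⟨h₄.exact.lift g hgπ, h₄.exact.lift_f g hgπ⟩
  have key : F = 𝟙 M + π' ≫ ϖ ≫ f ≫ j ≫ ι' := by
    have : π' ≫ ϖ ≫ f ≫ j ≫ ι' = (π' ≫ ϖ) ≫ (f ≫ (j ≫ ι')) := by simp
    rw [this, hf, hg, hG]; abel
  have tsq : ∀ f₀ : B ⟶ A, (π' ≫ ϖ ≫ f₀ ≫ j ≫ ι') ≫ (π' ≫ ϖ ≫ f₀ ≫ j ≫ ι') = 0 := by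
    intro f₀
    have hz : ι' ≫ π' ≫ ϖ = 0 := by
      rw [← Category.assoc, hcomm, Category.assoc, w₂, Limits.comp_zero]
    simp only [Category.assoc]
    rw [reassoc_of% hz]
    simp
  constructor
  · refine ⟨f, key, fun f' hf' => ?_⟩
    have : (π' ≫ ϖ) ≫ (f' ≫ (j ≫ ι')) = (π' ≫ ϖ) ≫ (f ≫ (j ≫ ι')) := by
      have := hf'.symm.trans key
      simpa only [add_right_inj, Category.assoc] using this
    rw [cancel_epi, cancel_mono] at this
    exact this
  · refine ⟨⟨𝟙 M - π' ≫ ϖ ≫ f ≫ j ≫ ι', ?_, ?_⟩⟩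
    · simp only [key, Preadditive.add_comp, Preadditive.sub_comp, Preadditive.comp_add,
        Preadditive.comp_sub, Category.id_comp, Category.comp_id, tsq f]
      abel
    · simp only [key, Preadditive.add_comp, Preadditive.sub_comp, Preadditive.comp_add,
        Preadditive.comp_sub, Category.id_comp, Category.comp_id, tsq f]
      abel
end
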